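/- Let R = (<₁, <₂, <₃) be a standard representation of a finite set V with |V| ≥ 3, with <ᵢ-maximum elements a₁, a₂, a₃, and let b be the <₁-maximum element of V \ {a₁}. Then a₁b is an edge of Σ₂(R). -/

import Mathlib

open SimpleGraph

variable {V : Type*}

/-- The graph Σ₂(R) for a triple of linear orders R = (l₁, l₂, l₃) on V:
`x` and `y` are adjacent iff every other vertex `z` lies above both `x` and `y`
in one of the three orders. -/
def Sigma2 (l₁ l₂ l₃ : LinearOrder V) : SimpleGraph V where
  Adj x y := x ≠ y ∧ ∀ z, z ≠ x → z ≠ y →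
    (l₁.lt x z ∧ l₁.lt y z) ∨ (l₂.lt x z ∧ l₂.lt y z) ∨ (l₃.lt x z ∧ l₃.lt y z)
  symm := ⟨by
    rintro x y ⟨hxy, h⟩
    exact ⟨hxy.symm, fun z hzy hzx => by rcases h z hzx hzy with h|h|h <;> tauto⟩⟩
  loopless := ⟨fun x h => h.1 rfl⟩

/-- The three orders have empty intersection: for distinct x, y, some order has x below y. -/
def IsRep (l₁ l₂ l₃ : LinearOrder V) : Prop :=
  ∀ x y : V, x ≠ y → l₁.lt x y ∨ l₂.lt x y ∨ l₃.lt x y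

/-- `a` is the maximum element of the linear order `l`. -/
def IsMaxOf (l : LinearOrder V) (a : V) : Prop := ∀ x, x ≠ a → l.lt x a

/-- `a` is among the two smallest elements of `l`: at most one element lies below `a`. -/
def AmongTwoSmallest (l : LinearOrder V) (a : V) : Prop :=
  ∀ x y, l.lt x a → l.lt y a → x = y

/-- `R = (l₁, l₂, l₃)` is a standard representation with `<ᵢ`-maxima `a₁, a₂, a₃`. -/
structure IsStdRep (l₁ l₂ l₃ : LinearOrder V) (a₁ a₂ a₃ : V) : Prop where
  rep : IsRep l₁ l₂ l₃
  top₁ : IsMaxOf l₁ a₁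
  top₂ : IsMaxOf l₂ a₂
  top₃ : IsMaxOf l₃ a₃
  a₁_small₂ : AmongTwoSmallest l₂ a₁
  a₁_small₃ : AmongTwoSmallest l₃ a₁
  a₂_small₁ : AmongTwoSmallest l₁ a₂
  a₂_small₃ : AmongTwoSmallest l₃ a₂
  a₃_small₁ : AmongTwoSmallest l₁ a₃
  a₃_small₂ : AmongTwoSmallest l₂ a₃

/-- The restriction of a linear order on `V` to `V \ {b}`. -/
def restrictOrder (l : LinearOrder V) (b : V) : LinearOrder {x : V // x ≠ b} :=
  @LinearOrder.lift' _ _ l Subtype.val Subtype.val_injective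

/-- For b the <₁-maximum element of V \ {a₁}, a₁b is an edge of Σ₂(R). -/
theorem stmt5 {V : Type*} [Fintype V] (hV : 3 ≤ Fintype.card V)
    (l₁ l₂ l₃ : LinearOrder V) (a₁ a₂ a₃ : V)
    (hR : IsStdRep l₁ l₂ l₃ a₁ a₂ a₃)
    (b : V) (hba : b ≠ a₁) (hb : ∀ x, x ≠ a₁ → x ≠ b → l₁.lt x b) :
    (Sigma2 l₁ l₂ l₃).Adj a₁ b := by
  have flip : ∀ (l : LinearOrder V) {x y : V}, ¬ l.lt x y → x ≠ y → l.lt y x := by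
    intro l x y h hne
    letI := l
    exact (hne.lt_or_gt).resolve_left h
  have tr : ∀ (l : LinearOrder V) {x y z : V}, l.lt x y → l.lt y z → l.lt x z := by
    intro l x y z h h'
    letI := l
    exact lt_trans h h'
  have asy : ∀ (l : LinearOrder V) {x y : V}, l.lt x y → ¬ l.lt y x := by
    intro l x y h
    letI := l
    exact lt_asymm h
  refine ⟨Ne.symm hba, ?_⟩
  intro z hza hzb
  have ha : l₂.lt a₁ z ∨ l₃.lt a₁ z := by
    rcases hR.rep a₁ z (Ne.symm hza) with h | h | h
    · exact absurd h (asy l₁ (hR.top₁ z hza))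
    · exact Or.inl h
    · exact Or.inr h
  have hbz : l₂.lt b z ∨ l₃.lt b z := by
    rcases hR.rep b z (Ne.symm hzb) with h | h | h
    · exact absurd h (asy l₁ (hb z hza hzb))
    · exact Or.inl h
    · exact Or.inr h
  rcases ha with h2a | h3a <;> rcases hbz with h2b | h3b
  · exact Or.inr (Or.inl ⟨h2a, h2b⟩)
  · by_cases hb2 : l₂.lt b z
    · exact Or.inr (Or.inl ⟨h2a, hb2⟩)
    by_cases ha3 : l₃.lt a₁ z
    · exact Or.inr (Or.inr ⟨ha3, h3b⟩)
    have hza3 : l₃.lt z a₁ := flip l₃ ha3 (Ne.symm hza)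
    have hab3 : l₃.lt a₁ b := by
      by_contra h
      exact hzb (hR.a₁_small₃ b z (flip l₃ h (Ne.symm hba)) hza3).symm
    exact absurd (tr l₃ hza3 hab3) (asy l₃ h3b)
  · by_cases hb3 : l₃.lt b z
    · exact Or.inr (Or.inr ⟨h3a, hb3⟩)
    by_cases ha2 : l₂.lt a₁ z
    · exact Or.inr (Or.inl ⟨ha2, h2b⟩)
    have hza2 : l₂.lt z a₁ := flip l₂ ha2 (Ne.symm hza)
    have hab2 : l₂.lt a₁ b := by
      by_contra h
      exact hzb (hR.a₁_small₂ b z (flip l₂ h (Ne.symm hba)) hza2).symm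
    exact absurd (tr l₂ hza2 hab2) (asy l₂ h2b)
  · exact Or.inr (Or.inr ⟨h3a, h3b⟩)
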